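/- Let D ⊆ ℝ² be open, let N₀ : D → ℂ³ be differentiable, and let R : D → Matrix (Fin 3) (Fin 3) ℂ be differentiable with (R p)ᵀ * R p = 1 and det (R p) = 1 for all p ∈ D. Define N : D → ℂ³ by N p := (R p).mulVec (N₀ p). Then for all p ∈ D and all v ∈ ℝ²: N₀ p × (((R p)ᵀ * fderiv ℝ R p v).mulVec (N₀ p)) = (R p)ᵀ.mulVec (N p × fderiv ℝ N p v) − N₀ p × fderiv ℝ N₀ p v. (This is the paper's formula ω = R⁻¹(N × dN) − N₀ × dN₀ for the connection form of a rolling, equation (2.3) combined with the definition of ω.) -/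

import Mathlib

open Matrix

noncomputable instance : NormedAddCommGroup (Matrix (Fin 3) (Fin 3) ℂ) :=
  Matrix.normedAddCommGroup

noncomputable instance : NormedSpace ℝ (Matrix (Fin 3) (Fin 3) ℂ) :=
  Matrix.normedSpace

/-- The standard cross product on ℂ³. -/
def cross3 (x y : Fin 3 → ℂ) : Fin 3 → ℂ := crossProduct x y

/-- `mulVec` as a continuous ℝ-bilinear map. -/
noncomputable def mulVecCLM : Matrix (Fin 3) (Fin 3) ℂ →L[ℝ] (Fin 3 → ℂ) →L[ℝ] (Fin 3 → ℂ) :=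
  LinearMap.toContinuousLinearMap
  { toFun := fun M => LinearMap.toContinuousLinearMap ((Matrix.mulVecLin M).restrictScalars ℝ)
    map_add' := by
      intro M M'; ext v i; simp [Matrix.add_mulVec]
    map_smul' := by
      intro r M; ext v i
      simp [Matrix.mulVec, dotProduct, Finset.smul_sum, smul_mul_assoc, mul_assoc] }

@[simp] lemma mulVecCLM_apply (M : Matrix (Fin 3) (Fin 3) ℂ) (v : Fin 3 → ℂ) :
    mulVecCLM M v = M.mulVec v := rfl

/-- Product rule for `mulVec`. -/
lemma fderiv_mulVec (R : ℝ × ℝ → Matrix (Fin 3) (Fin 3) ℂ) (N₀ : ℝ × ℝ → Fin 3 → ℂ) (p : ℝ × ℝ)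
    (hR : DifferentiableAt ℝ R p) (hN₀ : DifferentiableAt ℝ N₀ p) (v : ℝ × ℝ) :
    fderiv ℝ (fun q => (R q).mulVec (N₀ q)) p v =
      (fderiv ℝ R p v).mulVec (N₀ p) + (R p).mulVec (fderiv ℝ N₀ p v) := by
  have h := (mulVecCLM.isBoundedBilinearMap.hasFDerivAt (R p, N₀ p)).comp p
    (HasFDerivAt.prodMk (hR.hasFDerivAt) (hN₀.hasFDerivAt))
  have h2 : (fun q => (R q).mulVec (N₀ q)) =
      (fun x : _ × _ => mulVecCLM x.1 x.2) ∘ fun q => (R q, N₀ q) := rfl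
  rw [h2]; erw [h.fderiv]
  simp [IsBoundedBilinearMap.deriv]
  rw [add_comm]; rfl

/-- The key algebraic identity: `Mᵀ (Ma × Mb) = det M • (a × b)`. -/
lemma cross_key (M : Matrix (Fin 3) (Fin 3) ℂ) (a b : Fin 3 → ℂ) :
    Mᵀ.mulVec (crossProduct (M.mulVec a) (M.mulVec b)) = M.det • crossProduct a b := by
  funext k
  fin_cases k <;>
  · simp [Matrix.mulVec, dotProduct, cross_apply, Matrix.det_fin_three,
      Fin.sum_univ_three, Matrix.transpose_apply]
    ring

/-- Rotations preserve the cross product. -/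
lemma so3_cross (M : Matrix (Fin 3) (Fin 3) ℂ) (horth : Mᵀ * M = 1) (hdet : M.det = 1)
    (a b : Fin 3 → ℂ) :
    crossProduct (M.mulVec a) (M.mulVec b) = M.mulVec (crossProduct a b) := by
  have h2 : M * Mᵀ = 1 := mul_eq_one_comm.mp horth
  have h := congrArg M.mulVec (cross_key M a b)
  rw [hdet, one_smul] at h
  rwa [Matrix.mulVec_mulVec, h2, Matrix.one_mulVec] at h

/-- The paper's formula ω = R⁻¹(N × dN) − N₀ × dN₀ for the connection form of a
rolling. -/
theorem connection_form_formula (D : Set (ℝ × ℝ)) (hD : IsOpen D)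
    (N₀ : ℝ × ℝ → Fin 3 → ℂ) (hN₀ : DifferentiableOn ℝ N₀ D)
    (R : ℝ × ℝ → Matrix (Fin 3) (Fin 3) ℂ) (hR : DifferentiableOn ℝ R D)
    (horth : ∀ p ∈ D, (R p)ᵀ * R p = 1) (hdet : ∀ p ∈ D, (R p).det = 1)
    (N : ℝ × ℝ → Fin 3 → ℂ) (hN : ∀ p, N p = (R p).mulVec (N₀ p)) :
    ∀ p ∈ D, ∀ v : ℝ × ℝ,
      cross3 (N₀ p) (((R p)ᵀ * fderiv ℝ R p v).mulVec (N₀ p)) =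
        (R p)ᵀ.mulVec (cross3 (N p) (fderiv ℝ N p v)) -
          cross3 (N₀ p) (fderiv ℝ N₀ p v) := by
  intro p hp v
  have hRd : DifferentiableAt ℝ R p := hR.differentiableAt (hD.mem_nhds hp)
  have hN₀d : DifferentiableAt ℝ N₀ p := hN₀.differentiableAt (hD.mem_nhds hp)
  have hNfun : N = fun q => (R q).mulVec (N₀ q) := funext hN
  have hdN : fderiv ℝ N p v =
      (fderiv ℝ R p v).mulVec (N₀ p) + (R p).mulVec (fderiv ℝ N₀ p v) := by
    rw [hNfun]; exact fderiv_mulVec R N₀ p hRd hN₀d v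
  set M := R p with hM
  set dR := fderiv ℝ R p v with hdR
  set dN₀ := fderiv ℝ N₀ p v with hdN₀
  have h1 : Mᵀ * M = 1 := horth p hp
  have h1' : M * Mᵀ = 1 := mul_eq_one_comm.mp h1
  have hd1 : M.det = 1 := hdet p hp
  -- rewrite dR.mulVec (N₀ p) as M.mulVec ((Mᵀ * dR).mulVec (N₀ p))
  have hrw : dR.mulVec (N₀ p) = M.mulVec ((Mᵀ * dR).mulVec (N₀ p)) := by
    rw [Matrix.mulVec_mulVec, ← Matrix.mul_assoc, h1', Matrix.one_mul]
  unfold cross3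
  rw [hN p, hdN, hrw]
  rw [map_add (crossProduct (M.mulVec (N₀ p)))]
  rw [so3_cross M h1 hd1 (N₀ p) ((Mᵀ * dR).mulVec (N₀ p)),
      so3_cross M h1 hd1 (N₀ p) dN₀]
  rw [Matrix.mulVec_add, Matrix.mulVec_mulVec, Matrix.mulVec_mulVec, h1,
      Matrix.one_mulVec, Matrix.one_mulVec, add_sub_cancel_right]
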